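/- arXiv:1202.4622 — 2 statements merged into one kernel-verified Lean document; each statement's English description precedes it below -/
import Mathlib

section
/- Let α be irrational with complete quotients α_ν and reversed quotients α*_ν satisfying α*_ν + α_{ν+1} > 2 and α*_{ν+1} + α_{ν+2} > 2, and let d_{2,ν}² = (q_{ν+1} - q_ν)/(ξ_ν - ξ_{ν+1}). Then d_{2,ν}² · ξ_{ν+1}/q_{ν+1} ≤ 1 ≤ d_{2,ν}² · ξ_ν/q_ν. -/
open Real Filter Set

/-- The function F from the paper. -/
noncomputable def Fm (x y : ℝ) : ℝ := (1 - x*y)^2 / (4*(1+x*y)*(1-x)*(1-y))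

/-- The function G from the paper. -/
noncomputable def Gm (x y : ℝ) : ℝ := (x + y + 1)/4

/-- Complete quotients of α : cq α 0 = α, cq α (n+1) = 1/{cq α n}. -/
noncomputable def cq (α : ℝ) : ℕ → ℝ
  | 0 => α
  | n+1 => (Int.fract (cq α n))⁻¹

/-- Partial quotients a_n of the continued fraction of α. -/
noncomputable def pquot (α : ℝ) (n : ℕ) : ℤ := ⌊cq α n⌋

/-- Denominators q_n of the convergents of α. -/
noncomputable def qd (α : ℝ) : ℕ → ℝ
  | 0 => 1
  | 1 => (pquot α 1 : ℝ)
  | n+2 => (pquot α (n+2) : ℝ) * qd α (n+1) + qd α n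

/-- Numerators p_n of the convergents of α. -/
noncomputable def pnum (α : ℝ) : ℕ → ℝ
  | 0 => (pquot α 0 : ℝ)
  | 1 => (pquot α 1 : ℝ) * (pquot α 0 : ℝ) + 1
  | n+2 => (pquot α (n+2) : ℝ) * pnum α (n+1) + pnum α n

/-- ξ_n = |q_n α - p_n|. -/
noncomputable def xi (α : ℝ) (n : ℕ) : ℝ := |qd α n * α - pnum α n|

/-- α*_n = [0; a_n, ..., a_1] = q_{n-1}/q_n. -/
noncomputable def astar (α : ℝ) (n : ℕ) : ℝ := qd α (n-1) / qd α n

/-- Distance from x to the nearest integer. -/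
noncomputable def nidist (x : ℝ) : ℝ := |x - round x|

/-- The ν-th convergent denominator satisfies the Legendre condition. -/
noncomputable def LegendreDen (α : ℝ) (ν : ℕ) : Prop :=
  |α - pnum α ν / qd α ν| < 1/(2 * (qd α ν)^2)

/-- ψ_α(t) = min_{1 ≤ x ≤ t} ‖xα‖. -/
noncomputable def psif (α : ℝ) (t : ℝ) : ℝ :=
  sInf {d : ℝ | ∃ x : ℤ, 1 ≤ x ∧ (x:ℝ) ≤ t ∧ d = nidist (x*α)}
lemma my_fract_pos {x : ℝ} (h : Irrational x) : 0 < Int.fract x := by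
  rcases lt_or_eq_of_le (Int.fract_nonneg x) with h' | h'
  · exact h'
  · exfalso
    have hx : x = (⌊x⌋ : ℝ) := by
      have h2 := h'.symm
      rw [Int.fract, sub_eq_zero] at h2
      exact h2
    exact h.ne_int ⌊x⌋ hx

lemma cq_irr {α : ℝ} (hα : Irrational α) : ∀ n, Irrational (cq α n) := by
  intro n
  induction n with
  | zero => exact hα
  | succ n ih =>
    show Irrational (Int.fract (cq α n))⁻¹
    have : Irrational (Int.fract (cq α n)) := by
      rw [Int.fract]; exact ih.sub_intCast _
    exact this.inv

lemma cq_gt_one {α : ℝ} (hα : Irrational α) {n : ℕ} (hn : 1 ≤ n) : 1 < cq α n := by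
  obtain ⟨m, rfl⟩ : ∃ m, n = m + 1 := ⟨n - 1, (Nat.succ_pred_eq_of_pos hn).symm⟩
  show 1 < (Int.fract (cq α m))⁻¹
  have h0 : 0 < Int.fract (cq α m) := my_fract_pos (cq_irr hα m)
  have h1 : Int.fract (cq α m) < 1 := Int.fract_lt_one _
  exact one_lt_inv_iff₀.mpr ⟨h0, h1⟩

lemma cq_split {α : ℝ} (hα : Irrational α) (n : ℕ) :
    cq α n = (pquot α n : ℝ) + (cq α (n+1))⁻¹ := by
  show cq α n = (⌊cq α n⌋ : ℝ) + ((Int.fract (cq α n))⁻¹)⁻¹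
  rw [inv_inv, Int.fract]
  ring

lemma pquot_pos {α : ℝ} (hα : Irrational α) {n : ℕ} (hn : 1 ≤ n) : 1 ≤ (pquot α n : ℝ) := by
  have h := cq_gt_one hα hn
  have h2 : (1 : ℤ) ≤ ⌊cq α n⌋ := Int.le_floor.mpr (by push_cast; linarith)
  exact_mod_cast h2

lemma qd_pos {α : ℝ} (hα : Irrational α) : ∀ n, 0 < qd α n := by
  have key : ∀ n, 0 < qd α n ∧ 0 < qd α (n+1) := by
    intro n
    induction n with
    | zero =>
      refine ⟨by norm_num [qd], ?_⟩
      show (0:ℝ) < (pquot α 1 : ℝ)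
      linarith [pquot_pos hα (le_refl 1)]
    | succ n ih =>
      refine ⟨ih.2, ?_⟩
      show 0 < (pquot α (n+2) : ℝ) * qd α (n+1) + qd α n
      nlinarith [pquot_pos hα (show 1 ≤ n+2 by omega), ih.1, ih.2]
  exact fun n => (key n).1

noncomputable def Sf (α : ℝ) (n : ℕ) : ℝ := qd α n * α - pnum α n

lemma Sf_zero (α : ℝ) : Sf α 0 = Int.fract α := by
  show qd α 0 * α - pnum α 0 = Int.fract α
  rw [show qd α 0 = 1 from rfl, show pnum α 0 = ((⌊α⌋:ℤ):ℝ) from rfl, Int.fract]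
  ring

lemma Sf_base {α : ℝ} (hα : Irrational α) : cq α 1 * Sf α 0 = 1 := by
  rw [Sf_zero]
  show (Int.fract (cq α 0))⁻¹ * Int.fract α = 1
  exact inv_mul_cancel₀ (ne_of_gt (my_fract_pos hα))

lemma Sf_one (α : ℝ) : Sf α 1 = (pquot α 1 : ℝ) * Sf α 0 - 1 := by
  simp only [Sf, qd, pnum]
  ring

lemma Sf_step (α : ℝ) (n : ℕ) :
    Sf α (n+2) = (pquot α (n+2) : ℝ) * Sf α (n+1) + Sf α n := by
  simp only [Sf, qd, pnum]
  ring

lemma Sf_rec {α : ℝ} (hα : Irrational α) : ∀ n, cq α (n+2) * Sf α (n+1) + Sf α n = 0 := by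
  intro n
  induction n with
  | zero =>
    have hb := Sf_base hα
    have hA : (0:ℝ) < cq α 2 := lt_trans one_pos (cq_gt_one hα (by norm_num))
    have hp : (pquot α 1 : ℝ) = cq α 1 - (cq α 2)⁻¹ := by
      have := cq_split hα 1; linarith
    rw [Sf_one, hp]
    field_simp
    linear_combination (cq α 2) * hb
  | succ n ih =>
    have hA : (0:ℝ) < cq α (n+3) := lt_trans one_pos (cq_gt_one hα (by omega))
    have hp : (pquot α (n+2) : ℝ) = cq α (n+2) - (cq α (n+3))⁻¹ := by
      have := cq_split hα (n+2); linarith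
    rw [show n+1+2 = n+3 from rfl, Sf_step, hp]
    field_simp
    linear_combination (cq α (n+3)) * ih

lemma Sf_ne {α : ℝ} (hα : Irrational α) : ∀ n, Sf α n ≠ 0 := by
  intro n
  induction n with
  | zero => rw [Sf_zero]; exact ne_of_gt (my_fract_pos hα)
  | succ n ih =>
    intro h
    have := Sf_rec hα n
    rw [h, mul_zero, zero_add] at this
    exact ih this

lemma xi_eq (α : ℝ) (n : ℕ) : xi α n = |Sf α n| := rfl

lemma xi_pos {α : ℝ} (hα : Irrational α) (n : ℕ) : 0 < xi α n :=
  abs_pos.mpr (Sf_ne hα n)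

lemma xi_rel {α : ℝ} (hα : Irrational α) (n : ℕ) :
    xi α n = cq α (n+2) * xi α (n+1) := by
  have h := Sf_rec hα n
  have hA : (0:ℝ) < cq α (n+2) := lt_trans one_pos (cq_gt_one hα (by omega))
  rw [xi_eq, xi_eq]
  have : Sf α n = -(cq α (n+2) * Sf α (n+1)) := by linarith
  rw [this, abs_neg, abs_mul, abs_of_pos hA]

theorem stmt9 (α : ℝ) (hα : Irrational α) (ν : ℕ) (hν : 1 ≤ ν)
    (h1 : astar α ν + cq α (ν+1) > 2) (h2 : astar α (ν+1) + cq α (ν+2) > 2) :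
    ((qd α (ν+1) - qd α ν) / (xi α ν - xi α (ν+1))) * (xi α (ν+1) / qd α (ν+1)) ≤ 1 ∧
    1 ≤ ((qd α (ν+1) - qd α ν) / (xi α ν - xi α (ν+1))) * (xi α ν / qd α ν) := by
  obtain ⟨m, rfl⟩ : ∃ m, ν = m + 1 := ⟨ν - 1, (Nat.succ_pred_eq_of_pos hν).symm⟩
  have hq''pos : 0 < qd α m := qd_pos hα m
  have hqpos : 0 < qd α (m+1) := qd_pos hα (m+1)
  have hq'pos : 0 < qd α (m+2) := qd_pos hα (m+2)
  have hB : 1 < cq α (m+2) := cq_gt_one hα (by omega)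
  have hA : 1 < cq α (m+3) := cq_gt_one hα (by omega)
  have ht : 0 < xi α (m+2) := xi_pos hα (m+2)
  have hrel : xi α (m+1) = cq α (m+3) * xi α (m+2) := xi_rel hα (m+1)
  have hast1 : astar α (m+1) = qd α m / qd α (m+1) := rfl
  have hast2 : astar α (m+2) = qd α (m+1) / qd α (m+2) := rfl
  rw [hast1] at h1
  rw [show m+1+1 = m+2 from rfl, hast2, show m+1+2 = m+3 from rfl] at h2
  have hk1 : (2 - cq α (m+2)) * qd α (m+1) < qd α m := by
    have := (lt_div_iff₀ hqpos).mp (show 2 - cq α (m+2) < qd α m / qd α (m+1) by linarith)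
    linarith
  have hk2 : (2 - cq α (m+3)) * qd α (m+2) < qd α (m+1) := by
    have := (lt_div_iff₀ hq'pos).mp
      (show 2 - cq α (m+3) < qd α (m+1) / qd α (m+2) by linarith)
    linarith
  have hq'eq : qd α (m+2) = (pquot α (m+2) : ℝ) * qd α (m+1) + qd α m := rfl
  have hp : (pquot α (m+2) : ℝ) = cq α (m+2) - (cq α (m+3))⁻¹ := by
    have := cq_split hα (m+2); rw [show m+2+1 = m+3 from rfl] at this; linarith
  have hA0 : (0:ℝ) < cq α (m+3) := by linarith
  have hAq' : cq α (m+3) * qd α (m+2)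
      = (cq α (m+3) * cq α (m+2) - 1) * qd α (m+1) + cq α (m+3) * qd α m := by
    rw [hq'eq, hp]
    field_simp
  rw [show m+1+1 = m+2 from rfl, hrel]
  have hden : 0 < cq α (m+3) * xi α (m+2) - xi α (m+2) := by nlinarith
  constructor
  · rw [div_mul_div_comm, div_le_one (by positivity)]
    nlinarith [mul_pos ht (show 0 < (cq α (m+3) - 1) * qd α (m+2) - (qd α (m+2) - qd α (m+1))
      by nlinarith)]
  · rw [div_mul_div_comm, le_div_iff₀ (by positivity), one_mul]
    have hkey : (2 * cq α (m+3) - 1) * qd α (m+1) < cq α (m+3) * qd α (m+2) := by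
      nlinarith [mul_pos hA0 (show 0 < cq α (m+2) * qd α (m+1) + qd α m - 2 * qd α (m+1)
        by nlinarith)]
    nlinarith [mul_pos ht (show 0 < cq α (m+3) * qd α (m+2) - (2 * cq α (m+3) - 1) * qd α (m+1)
      by linarith)]
end

section
/- Let A_{ν-1} = (q_{ν-1}, ξ_{ν-1}) and A_{ν+1} = (q_{ν+1}, ξ_{ν+1}) be points in ℝ², where α is irrational with a_{ν+1} = 1. Then the maximum of the product t·μ over all points (t,μ) on the line segment joining A_{ν-1} and A_{ν+1} equals G(α*_ν, α_{ν+2}⁻¹) = (α*_ν + α_{ν+2}⁻¹ + 1)/4. -/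
open Real Filter Set

section aux
variable (α : ℝ)

lemma cq_irrational (hα : Irrational α) : ∀ n, Irrational (cq α n)
  | 0 => hα
  | n+1 => by
    have h := cq_irrational hα n
    have hf : Irrational (Int.fract (cq α n)) := by
      rw [← Int.self_sub_floor]
      exact h.sub_intCast ⌊cq α n⌋
    exact hf.inv

lemma fract_cq_pos (hα : Irrational α) (n : ℕ) : 0 < Int.fract (cq α n) := by
  refine Int.fract_pos.mpr ?_
  exact (cq_irrational α hα n).ne_int _

lemma cq_succ_gt_one (hα : Irrational α) (n : ℕ) : 1 < cq α (n+1) := by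
  rw [cq]
  rw [lt_inv_comm₀ one_pos (fract_cq_pos α hα n)]
  simpa using Int.fract_lt_one (cq α n)

lemma cq_eq (n : ℕ) : cq α n = (pquot α n : ℝ) + (cq α (n+1))⁻¹ := by
  have h : (cq α (n+1))⁻¹ = Int.fract (cq α n) := by
    rw [cq, inv_inv]
  rw [h, pquot, ← Int.self_sub_floor]
  ring

lemma pquot_succ_ge_one (hα : Irrational α) (n : ℕ) : (1:ℝ) ≤ (pquot α (n+1) : ℝ) := by
  have := cq_succ_gt_one α hα n
  have : (1:ℤ) ≤ ⌊cq α (n+1)⌋ := by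
    rw [Int.le_floor]; exact_mod_cast this.le
  exact_mod_cast this

lemma qd_ge_one (hα : Irrational α) : ∀ n, (1:ℝ) ≤ qd α n
  | 0 => le_refl _
  | 1 => by rw [qd]; exact pquot_succ_ge_one α hα 0
  | n+2 => by
    rw [qd]
    have h1 := qd_ge_one hα (n+1)
    have h0 := qd_ge_one hα n
    have ha := pquot_succ_ge_one α hα (n+1)
    nlinarith

lemma qd_mono_succ (hα : Irrational α) : ∀ n, qd α n ≤ qd α (n+1)
  | 0 => by rw [qd, qd]; exact pquot_succ_ge_one α hα 0
  | n+1 => by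
    rw [qd]
    have h1 := qd_ge_one α hα (n+1)
    have h0 := qd_ge_one α hα n
    have ha := pquot_succ_ge_one α hα (n+1)
    nlinarith

lemma pnum_int : ∀ n, ∃ z : ℤ, pnum α n = (z:ℝ)
  | 0 => ⟨pquot α 0, by rw [pnum]⟩
  | 1 => ⟨pquot α 1 * pquot α 0 + 1, by rw [pnum]; push_cast; ring⟩
  | n+2 => by
    obtain ⟨z1, h1⟩ := pnum_int (n+1)
    obtain ⟨z0, h0⟩ := pnum_int n
    exact ⟨pquot α (n+2) * z1 + z0, by rw [pnum, h1, h0]; push_cast; ring⟩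

lemma qd_int : ∀ n, ∃ z : ℤ, qd α n = (z:ℝ)
  | 0 => ⟨1, by rw [qd]; norm_num⟩
  | 1 => ⟨pquot α 1, by rw [qd]⟩
  | n+2 => by
    obtain ⟨z1, h1⟩ := qd_int (n+1)
    obtain ⟨z0, h0⟩ := qd_int n
    exact ⟨pquot α (n+2) * z1 + z0, by rw [qd, h1, h0]; push_cast; ring⟩

lemma eta_ne_zero (hα : Irrational α) (n : ℕ) : qd α n * α - pnum α n ≠ 0 := by
  intro h
  obtain ⟨p, hp⟩ := pnum_int α n
  obtain ⟨q, hq⟩ := qd_int α n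
  have hq1 : (1:ℝ) ≤ qd α n := qd_ge_one α hα n
  have hqne : (q:ℝ) ≠ 0 := by rw [← hq]; linarith
  have : α = (p:ℝ)/(q:ℝ) := by
    rw [hp, hq] at h
    field_simp
    linarith
  have : α = ((p/q : ℚ) : ℝ) := by push_cast; exact this
  exact hα ⟨_, this.symm⟩

/-- Key recurrence: cq α (n+2) * η(n+1) = -η n. -/
lemma eta_rec (hα : Irrational α) :
    ∀ n, cq α (n+2) * (qd α (n+1) * α - pnum α (n+1)) = -(qd α n * α - pnum α n) := by
  have key : ∀ n, Int.fract (cq α (n+1)) * (qd α n * α - pnum α n)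
      = -(qd α (n+1) * α - pnum α (n+1)) := by
    intro n
    induction n with
    | zero =>
      have h1 : Int.fract (cq α 1) = cq α 1 - (pquot α 1 : ℝ) := by
        rw [pquot, ← Int.self_sub_floor]
      have h2 : cq α 1 = (Int.fract α)⁻¹ := by rw [cq]; rfl
      have h3 : Int.fract α = α - (pquot α 0 : ℝ) := by
        rw [pquot, ← Int.self_sub_floor]; rfl
      have hf : Int.fract α ≠ 0 := (fract_cq_pos α hα 0).ne'
      rw [h1, h2, h3] at *
      rw [qd, qd, pnum, pnum]
      field_simp
      ring
    | succ n ih =>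
      have h1 : Int.fract (cq α (n+2)) = cq α (n+2) - (pquot α (n+2) : ℝ) := by
        rw [pquot, ← Int.self_sub_floor]
      have h2 : cq α (n+2) = (Int.fract (cq α (n+1)))⁻¹ := by rw [cq]
      have hf : Int.fract (cq α (n+1)) ≠ 0 := (fract_cq_pos α hα (n+1)).ne'
      have hone : qd α (n+2) * α - pnum α (n+2)
          = (pquot α (n+2) : ℝ) * (qd α (n+1) * α - pnum α (n+1)) + (qd α n * α - pnum α n) := by
        rw [qd, pnum]; ring
      rw [h1, h2, hone]
      have hη : qd α (n+1) * α - pnum α (n+1) ≠ 0 := eta_ne_zero α hα (n+1)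
      field_simp
      linear_combination ih
  intro n
  have h2 : cq α (n+2) = (Int.fract (cq α (n+1)))⁻¹ := by rw [cq]
  have hf : Int.fract (cq α (n+1)) ≠ 0 := (fract_cq_pos α hα (n+1)).ne'
  rw [h2]
  have := key n
  field_simp
  linarith [this]

lemma det_eq (hα : Irrational α) :
    ∀ n, pnum α (n+1) * qd α n - pnum α n * qd α (n+1) = (-1:ℝ)^n
  | 0 => by rw [pnum, pnum, qd, qd]; ring
  | n+1 => by
    have ih := det_eq hα n
    rw [pnum, qd]
    rw [pow_succ]
    nlinarith [ih]

end aux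

theorem stmt10 (α : ℝ) (hα : Irrational α) (ν : ℕ) (hν : 1 ≤ ν)
    (ha : pquot α (ν+1) = 1) :
    IsGreatest ((fun p : ℝ × ℝ => p.1 * p.2) ''
        segment ℝ ((qd α (ν-1), xi α (ν-1)) : ℝ × ℝ) (qd α (ν+1), xi α (ν+1)))
      (Gm (astar α ν) (cq α (ν+2))⁻¹) := by
  obtain ⟨m, rfl⟩ : ∃ m, ν = m + 1 := ⟨ν - 1, (Nat.succ_pred_eq_of_pos hν).symm⟩
  simp only [Nat.add_sub_cancel]
  set β := cq α (m+2) with hβdef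
  set β2 := cq α (m+3) with hβ2def
  set q' := qd α m with hq'def
  set q := qd α (m+1) with hqdef
  set x := xi α (m+1) with hxdef
  have hβ : 1 < β := cq_succ_gt_one α hα (m+1)
  have hβ2 : 1 < β2 := cq_succ_gt_one α hα (m+2)
  have ha1 : (pquot α (m+2) : ℝ) = 1 := by exact_mod_cast ha
  have hβeq : β = 1 + β2⁻¹ := by
    have h := cq_eq α (m+2)
    rw [ha1] at h
    exact h
  have hq' : (1:ℝ) ≤ q' := qd_ge_one α hα m
  have hq : (1:ℝ) ≤ q := qd_ge_one α hα (m+1)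
  have hmono : q' ≤ q := qd_mono_succ α hα m
  have hq0 : (0:ℝ) < q := by linarith
  have hqne : q ≠ 0 := hq0.ne'
  -- eta facts
  set η := qd α (m+1) * α - pnum α (m+1) with hηdef
  have her : β * η = -(qd α m * α - pnum α m) := eta_rec α hα m
  have hdet : pnum α (m+1) * qd α m - pnum α m * qd α (m+1) = (-1:ℝ)^m := det_eq α hα m
  have heq : η * (β*q + q') = (-1:ℝ)^(m+1) := by
    rw [pow_succ]
    linear_combination q * her - hdet
  have hpos : 0 < β*q + q' := by nlinarith
  have hxq : x * (β*q + q') = 1 := by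
    rw [hxdef, xi, ← hηdef]
    rw [← abs_of_pos hpos, ← abs_mul, heq]
    rw [abs_pow, abs_neg, abs_one, one_pow]
  have hx0 : (0:ℝ) ≤ x := abs_nonneg _
  have hx_eq : x = (β*q + q')⁻¹ := eq_inv_of_mul_eq_one_right (by linear_combination hxq)
  have hx' : xi α m = β * x := by
    rw [xi, hxdef, xi, ← hηdef]
    have : qd α m * α - pnum α m = -(β * η) := by linarith
    rw [this, abs_neg, abs_mul, abs_of_pos (by linarith : (0:ℝ) < β)]
  have hx'' : xi α (m+2) = (β - 1) * x := by
    rw [xi, hxdef, xi, ← hηdef]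
    have h2 : qd α (m+2) * α - pnum α (m+2)
        = (pquot α (m+2) : ℝ) * η + (qd α m * α - pnum α m) := by
      rw [qd, pnum, hηdef]; ring
    rw [h2, ha1]
    have : (1:ℝ) * η + (qd α m * α - pnum α m) = -((β - 1) * η) := by linarith
    rw [this, abs_neg, abs_mul, abs_of_pos (by linarith : (0:ℝ) < β - 1)]
  have hq2 : qd α (m+2) = q + q' := by
    rw [qd, ha1, ← hqdef, ← hq'def]; ring
  have hastar : astar α (m+1) = q' / q := by
    rw [astar, Nat.add_sub_cancel, ← hqdef, ← hq'def]
  have hGval : Gm (astar α (m+1)) β2⁻¹ = (q'/q + β)/4 := by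
    rw [Gm, hastar, hβeq]; ring
  rw [hGval, hx', hx'', hq2]
  have hc1 : q'/q ≤ 1 := (div_le_one hq0).mpr hmono
  have hc0 : 0 < q'/q := div_pos (by linarith) hq0
  have hβle2 : β ≤ 2 := by
    have : β2⁻¹ ≤ 1 := by
      rw [inv_le_one_iff₀]; right; linarith
    linarith
  constructor
  · -- membership: the point at s* = (β - q'/q)/2
    set s : ℝ := (β - q'/q)/2 with hsdef
    have hs0 : 0 ≤ s := by rw [hsdef]; linarith
    have hs1 : s ≤ 1 := by rw [hsdef]; linarith
    refine ⟨(1-s) • ((q', β*x) : ℝ × ℝ) + s • ((q+q', (β-1)*x) : ℝ × ℝ), ?_, ?_⟩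
    · exact ⟨1-s, s, by linarith, hs0, by ring, rfl⟩
    · simp only [Prod.smul_mk, smul_eq_mul, Prod.mk_add_mk]
      rw [hx_eq, hsdef]
      have hd : β*q + q' ≠ 0 := hpos.ne'
      field_simp
      ring
  · -- upper bound
    rintro z ⟨p, ⟨a, b, ha0, hb0, hab, rfl⟩, rfl⟩
    simp only [Prod.smul_mk, smul_eq_mul, Prod.mk_add_mk]
    have hG : (q'/q + β)/4 = (q' + β*q)/(4*q) := by
      rw [div_eq_div_iff (by norm_num) (by linarith)]
      field_simp
    rw [hG, le_div_iff₀ (by linarith : (0:ℝ) < 4*q)]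
    have h2 : x*(β*q+q')^2 = β*q + q' := by
      rw [pow_two, ← mul_assoc, hxq, one_mul]
    have ha' : a = 1 - b := by linarith
    subst ha'
    clear her hdet heq hx_eq hβeq hGval hx' hx'' hq2 hastar hxq
    nlinarith [h2, mul_nonneg hx0 (sq_nonneg (β*q - q' - 2*b*q))]
end
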